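/- Let $f:\{0,1\}^n\to\{0,1\}$, $S\subseteq[n]$, and $t\in[0,1]$. Then $0\le -\frac{d}{dt}\mathrm{Q}_t^S(f)\le \frac14\sum_{i\in S}\mathrm{Q}_t^S(\mathbf{1}_{\{i\text{ is pivotal for }f\}})$, with equality in the second inequality when $f$ is monotone (non-decreasing in each coordinate). -/

import Mathlib

open Finset

/-- Joint weight of the heterogeneously noised pair: coordinates in `S` are resampled
with probability `t`, coordinates outside `S` with probability `1`. -/
noncomputable def noiseWeightS (n : ℕ) (S : Finset (Fin n)) (t : ℝ) (x y : Fin n → Bool) : ℝ :=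
  ∏ i : Fin n,
    (2:ℝ)⁻¹ * ((1 - (if i ∈ S then t else 1)) * (if x i = y i then 1 else 0)
      + (if i ∈ S then t else 1) / 2)

/-- `Q_t^S(f) = E[f(X) f(Y)]`. -/
noncomputable def QnoiseS (n : ℕ) (S : Finset (Fin n)) (t : ℝ) (f : (Fin n → Bool) → ℝ) : ℝ :=
  ∑ x : Fin n → Bool, ∑ y : Fin n → Bool, noiseWeightS n S t x y * f x * f y

/-- Indicator of the event that `i` is pivotal for `f`. -/
noncomputable def pivInd {n : ℕ} (f : (Fin n → Bool) → ℝ) (i : Fin n)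
    (x : Fin n → Bool) : ℝ :=
  if f (Function.update x i (!(x i))) ≠ f x then 1 else 0

namespace DMR
variable {n : ℕ}

noncomputable def chi (b : Bool) : ℝ := if b then 1 else -1

noncomputable def chiT (T : Finset (Fin n)) (x : Fin n → Bool) : ℝ := ∏ i ∈ T, chi (x i)

noncomputable def fcoef (T : Finset (Fin n)) (g : (Fin n → Bool) → ℝ) : ℝ :=
  ∑ x, chiT T x * g x

noncomputable def Kker (ρ : Fin n → ℝ) (x y : Fin n → Bool) : ℝ :=
  ∏ i, (4:ℝ)⁻¹ * (1 + ρ i * (chi (x i) * chi (y i)))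

noncomputable def Bform (ρ : Fin n → ℝ) (g h : (Fin n → Bool) → ℝ) : ℝ :=
  ∑ x, ∑ y, Kker ρ x y * g x * h y

noncomputable def dfun (i : Fin n) (g : (Fin n → Bool) → ℝ) (x : Fin n → Bool) : ℝ :=
  g (Function.update x i true) - g (Function.update x i false)

lemma Kker_expand (ρ : Fin n → ℝ) (x y : Fin n → Bool) :
    Kker ρ x y = ((4:ℝ)^n)⁻¹ * ∑ T ∈ (univ : Finset (Fin n)).powerset,
      (∏ i ∈ T, ρ i) * (chiT T x * chiT T y) := by
  unfold Kker
  rw [Finset.prod_mul_distrib, Finset.prod_const, card_univ, Fintype.card_fin, ← inv_pow]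
  congr 1
  have h := Finset.prod_add (fun i => ρ i * (chi (x i) * chi (y i))) (fun _ => (1:ℝ))
    (univ : Finset (Fin n))
  simp only [prod_const_one, mul_one] at h
  calc ∏ i, (1 + ρ i * (chi (x i) * chi (y i)))
      = ∏ i, (ρ i * (chi (x i) * chi (y i)) + 1) := by
        exact Finset.prod_congr rfl fun i _ => by ring
    _ = ∑ T ∈ (univ : Finset (Fin n)).powerset, ∏ i ∈ T, (ρ i * (chi (x i) * chi (y i))) := h
    _ = ∑ T ∈ (univ : Finset (Fin n)).powerset, (∏ i ∈ T, ρ i) * (chiT T x * chiT T y) := by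
        refine sum_congr rfl fun T _ => ?_
        rw [Finset.prod_mul_distrib, Finset.prod_mul_distrib]
        rfl

lemma Bform_fourier (ρ : Fin n → ℝ) (g h : (Fin n → Bool) → ℝ) :
    Bform ρ g h = ((4:ℝ)^n)⁻¹ * ∑ T ∈ (univ : Finset (Fin n)).powerset,
      (∏ i ∈ T, ρ i) * (fcoef T g * fcoef T h) := by
  unfold Bform
  have step : ∀ x y : Fin n → Bool, Kker ρ x y * g x * h y
      = ∑ T ∈ (univ : Finset (Fin n)).powerset,
          ((4:ℝ)^n)⁻¹ * ((∏ i ∈ T, ρ i) * ((chiT T x * g x) * (chiT T y * h y))) := by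
    intro x y
    rw [Kker_expand, mul_assoc, mul_sum, sum_mul]
    exact sum_congr rfl fun T _ => by ring
  simp only [step]
  calc ∑ x : Fin n → Bool, ∑ y : Fin n → Bool, ∑ T ∈ (univ : Finset (Fin n)).powerset,
        ((4:ℝ)^n)⁻¹ * ((∏ i ∈ T, ρ i) * ((chiT T x * g x) * (chiT T y * h y)))
      = ∑ x : Fin n → Bool, ∑ T ∈ (univ : Finset (Fin n)).powerset, ∑ y : Fin n → Bool,
        ((4:ℝ)^n)⁻¹ * ((∏ i ∈ T, ρ i) * ((chiT T x * g x) * (chiT T y * h y))) := by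
        exact sum_congr rfl fun x _ => Finset.sum_comm
    _ = ∑ T ∈ (univ : Finset (Fin n)).powerset, ∑ x : Fin n → Bool, ∑ y : Fin n → Bool,
        ((4:ℝ)^n)⁻¹ * ((∏ i ∈ T, ρ i) * ((chiT T x * g x) * (chiT T y * h y))) :=
        Finset.sum_comm
    _ = ((4:ℝ)^n)⁻¹ * ∑ T ∈ (univ : Finset (Fin n)).powerset,
        (∏ i ∈ T, ρ i) * (fcoef T g * fcoef T h) := by
        rw [mul_sum]
        refine sum_congr rfl fun T _ => ?_
        show _ = ((4:ℝ)^n)⁻¹ * ((∏ i ∈ T, ρ i) * ((∑ x, chiT T x * g x) * (∑ y, chiT T y * h y)))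
        rw [Finset.sum_mul_sum]
        simp only [Finset.mul_sum]

lemma weight_eq (S : Finset (Fin n)) (t : ℝ) (x y : Fin n → Bool) :
    noiseWeightS n S t x y = Kker (fun j => if j ∈ S then 1 - t else 0) x y := by
  refine Finset.prod_congr rfl fun i _ => ?_
  by_cases hi : i ∈ S
  · simp only [if_pos hi]
    by_cases hxy : x i = y i
    · rw [if_pos hxy, hxy]
      cases y i <;> simp [chi] <;> ring
    · rw [if_neg hxy]
      cases hx : x i <;> cases hy : y i <;> simp_all [chi] <;> ring
  · simp only [if_neg hi]
    by_cases hxy : x i = y i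
    · rw [if_pos hxy]; norm_num
    · rw [if_neg hxy]; norm_num

lemma Q_eq_B (S : Finset (Fin n)) (t : ℝ) (g : (Fin n → Bool) → ℝ) :
    QnoiseS n S t g = Bform (fun j => if j ∈ S then 1 - t else 0) g g := by
  refine sum_congr rfl fun x _ => sum_congr rfl fun y _ => ?_
  rw [weight_eq]

lemma prod_ite_mem' (E T : Finset (Fin n)) (r : ℝ) :
    (∏ j ∈ T, if j ∈ E then r else 0) = if T ⊆ E then r ^ T.card else 0 := by
  by_cases h : T ⊆ E
  · rw [if_pos h, ← prod_const]
    exact prod_congr rfl fun j hj => if_pos (h hj)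
  · rw [if_neg h]
    obtain ⟨j, hjT, hjE⟩ := Finset.not_subset.mp h
    exact prod_eq_zero hjT (if_neg hjE)

lemma filter_powerset' (S : Finset (Fin n)) :
    (univ : Finset (Fin n)).powerset.filter (fun T => T ⊆ S) = S.powerset := by
  ext T; simp

lemma Bform_indicator (E : Finset (Fin n)) (t : ℝ) (g h : (Fin n → Bool) → ℝ) :
    Bform (fun j => if j ∈ E then 1 - t else 0) g h
      = ((4:ℝ)^n)⁻¹ * ∑ U ∈ E.powerset, (1-t)^U.card * (fcoef U g * fcoef U h) := by
  rw [Bform_fourier]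
  congr 1
  rw [← filter_powerset' E, sum_filter]
  refine sum_congr rfl fun T _ => ?_
  rw [prod_ite_mem']
  split <;> simp

lemma Q_closed (S : Finset (Fin n)) (t : ℝ) (g : (Fin n → Bool) → ℝ) :
    QnoiseS n S t g = ((4:ℝ)^n)⁻¹ * ∑ T ∈ S.powerset, (1-t)^T.card * (fcoef T g)^2 := by
  rw [Q_eq_B, Bform_indicator]
  congr 1
  exact sum_congr rfl fun T _ => by rw [sq]

lemma hasDeriv_Q (S : Finset (Fin n)) (g : (Fin n → Bool) → ℝ) (t : ℝ) :
    HasDerivAt (fun s => QnoiseS n S s g)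
      (((4:ℝ)^n)⁻¹ * ∑ T ∈ S.powerset,
        (-(T.card:ℝ) * (1-t)^(T.card - 1)) * (fcoef T g)^2) t := by
  have hfun : (fun s => QnoiseS n S s g)
      = fun s => ((4:ℝ)^n)⁻¹ * ∑ T ∈ S.powerset, (1-s)^T.card * (fcoef T g)^2 :=
    funext fun s => Q_closed S s g
  rw [hfun]
  refine HasDerivAt.const_mul _ (HasDerivAt.fun_sum fun T _ => ?_)
  have h1 : HasDerivAt (fun s : ℝ => 1 - s) (-1) t := (hasDerivAt_id t).const_sub 1
  have h3 := (h1.fun_pow T.card).mul_const ((fcoef T g)^2)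
  exact h3.congr_deriv (by ring)

lemma flip_involutive (i : Fin n) :
    Function.Involutive (fun x : Fin n → Bool => Function.update x i (!(x i))) := by
  intro x; funext j
  rcases eq_or_ne j i with rfl | hj
  · simp
  · simp [Function.update_of_ne hj]

lemma sum_flip (i : Fin n) (F : (Fin n → Bool) → ℝ) :
    ∑ x, F (Function.update x i (!(x i))) = ∑ x, F x :=
  Fintype.sum_bijective _ (flip_involutive i).bijective _ _ (fun _ => rfl)

lemma chiT_update (U : Finset (Fin n)) (i : Fin n) (hi : i ∉ U) (x : Fin n → Bool) (b : Bool) :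
    chiT U (Function.update x i b) = chiT U x :=
  Finset.prod_congr rfl fun j hj => by
    rw [Function.update_of_ne (ne_of_mem_of_not_mem hj hi)]

lemma fcoef_insert (i : Fin n) (U : Finset (Fin n)) (hi : i ∉ U) (g : (Fin n → Bool) → ℝ) :
    fcoef (insert i U) g = 2⁻¹ * fcoef U (dfun i g) := by
  have key : ∀ x : Fin n → Bool,
      chiT (insert i U) x * g x
        + chiT (insert i U) (Function.update x i (!(x i))) * g (Function.update x i (!(x i)))
      = chiT U x * dfun i g x := by
    intro x
    have hins : ∀ z : Fin n → Bool, chiT (insert i U) z = chi (z i) * chiT U z :=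
      fun z => Finset.prod_insert hi
    rw [hins, hins]
    cases hb : x i
    · have hx : Function.update x i false = x := by rw [← hb]; exact Function.update_eq_self i x
      simp only [hb, Bool.not_false, Function.update_self, chiT_update U i hi]
      rw [← hx]
      simp only [Function.update_idem, chiT_update U i hi, dfun, hx]
      simp [chi]; ring
    · have hx : Function.update x i true = x := by rw [← hb]; exact Function.update_eq_self i x
      simp only [hb, Bool.not_true, Function.update_self, chiT_update U i hi]
      rw [← hx]
      simp only [Function.update_idem, chiT_update U i hi, dfun, hx]
      simp [chi]; ring
  have h2 : (2:ℝ) * fcoef (insert i U) g = fcoef U (dfun i g) := by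
    unfold fcoef
    rw [two_mul]
    nth_rewrite 2 [← sum_flip i (fun z => chiT (insert i U) z * g z)]
    rw [← Finset.sum_add_distrib]
    exact sum_congr rfl fun x _ => key x
  linarith

lemma fcoef_flip_zero (i : Fin n) (T : Finset (Fin n)) (hi : i ∈ T) (h : (Fin n → Bool) → ℝ)
    (hh : ∀ x, h (Function.update x i (!(x i))) = h x) : fcoef T h = 0 := by
  have hchi : ∀ x : Fin n → Bool, chiT T (Function.update x i (!(x i))) = - chiT T x := by
    intro x
    rw [← Finset.insert_erase hi]
    have hni : i ∉ T.erase i := notMem_erase i T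
    rw [show ∀ z : Fin n → Bool, chiT (insert i (T.erase i)) z = chi (z i) * chiT (T.erase i) z
      from fun z => Finset.prod_insert hni,
      show ∀ z : Fin n → Bool, chiT (insert i (T.erase i)) z = chi (z i) * chiT (T.erase i) z
      from fun z => Finset.prod_insert hni]
    rw [chiT_update _ i hni, Function.update_self]
    cases x i <;> simp [chi]
  have h1 : fcoef T h = - fcoef T h := by
    conv_lhs => rw [fcoef, ← sum_flip i (fun z => chiT T z * h z)]
    simp only [hchi, hh]
    simp [fcoef, neg_mul, Finset.sum_neg_distrib]
  linarith

lemma dfun_update (g : (Fin n → Bool) → ℝ) (i : Fin n) (x : Fin n → Bool) (b : Bool) :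
    dfun i g (Function.update x i b) = dfun i g x := by
  simp [dfun, Function.update_idem]

lemma pivInd_eq_abs (f : (Fin n → Bool) → ℝ) (hf : ∀ x, f x = 0 ∨ f x = 1) (i : Fin n)
    (x : Fin n → Bool) : pivInd f i x = |dfun i f x| := by
  unfold pivInd dfun
  cases hb : x i
  · have hx : Function.update x i false = x := by rw [← hb]; exact Function.update_eq_self i x
    rw [show f x = f (Function.update x i false) from by rw [hx]]
    simp only [Bool.not_false]
    rcases hf (Function.update x i true) with h1 | h1 <;>
      rcases hf (Function.update x i false) with h2 | h2 <;>
      simp [h1, h2]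
  · have hx : Function.update x i true = x := by rw [← hb]; exact Function.update_eq_self i x
    rw [show f x = f (Function.update x i true) from by rw [hx]]
    simp only [Bool.not_true]
    rcases hf (Function.update x i true) with h1 | h1 <;>
      rcases hf (Function.update x i false) with h2 | h2 <;>
      simp [h1, h2]

lemma Kker_nonneg (ρ : Fin n → ℝ) (hρ0 : ∀ j, 0 ≤ ρ j) (hρ1 : ∀ j, ρ j ≤ 1)
    (x y : Fin n → Bool) : 0 ≤ Kker ρ x y := by
  refine Finset.prod_nonneg fun j _ => ?_
  have h : -1 ≤ ρ j * (chi (x j) * chi (y j)) := by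
    have h0 := hρ0 j; have h1 := hρ1 j
    cases x j <;> cases y j <;> simp [chi] <;> linarith
  have : (0:ℝ) ≤ 1 + ρ j * (chi (x j) * chi (y j)) := by linarith
  positivity

lemma Bform_le (ρ : Fin n → ℝ) (hK : ∀ x y, 0 ≤ Kker ρ x y) (g : (Fin n → Bool) → ℝ) :
    Bform ρ g g ≤ Bform ρ (fun x => |g x|) (fun x => |g x|) := by
  refine Finset.sum_le_sum fun x _ => Finset.sum_le_sum fun y _ => ?_
  rw [mul_assoc, mul_assoc]
  refine mul_le_mul_of_nonneg_left ?_ (hK x y)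
  calc g x * g y ≤ |g x * g y| := le_abs_self _
    _ = |g x| * |g y| := abs_mul _ _

lemma key_i (S : Finset (Fin n)) (f : (Fin n → Bool) → ℝ) (hf : ∀ x, f x = 0 ∨ f x = 1)
    (t : ℝ) (ht0 : 0 ≤ t) (ht1 : t ≤ 1) (i : Fin n) (hi : i ∈ S) :
    (((4:ℝ)^n)⁻¹ * ∑ T ∈ S.powerset,
        (if i ∈ T then (1-t)^(T.card - 1) * (fcoef T f)^2 else 0)
      ≤ 4⁻¹ * QnoiseS n S t (pivInd f i))
    ∧ (Monotone f →
      ((4:ℝ)^n)⁻¹ * ∑ T ∈ S.powerset,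
        (if i ∈ T then (1-t)^(T.card - 1) * (fcoef T f)^2 else 0)
      = 4⁻¹ * QnoiseS n S t (pivInd f i)) := by
  have hρ0 : ∀ j, 0 ≤ (fun j => if j ∈ S.erase i then 1 - t else 0) j := by
    intro j; dsimp only; split <;> linarith
  have hρ1 : ∀ j, (fun j => if j ∈ S.erase i then 1 - t else 0) j ≤ 1 := by
    intro j; dsimp only; split <;> linarith
  have hre : ∑ T ∈ S.powerset, (if i ∈ T then (1-t)^(T.card - 1) * (fcoef T f)^2 else 0)
      = ∑ U ∈ (S.erase i).powerset, (1-t)^U.card * (4⁻¹ * (fcoef U (dfun i f))^2) := by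
    rw [← Finset.sum_filter]
    refine Finset.sum_bij' (fun T _ => T.erase i) (fun U _ => insert i U) ?_ ?_ ?_ ?_ ?_
    · intro T hT
      rw [mem_filter, mem_powerset] at hT
      exact mem_powerset.mpr (Finset.erase_subset_erase i hT.1)
    · intro U hU
      rw [mem_powerset, Finset.subset_erase] at hU
      exact mem_filter.mpr ⟨mem_powerset.mpr (Finset.insert_subset hi hU.1),
        Finset.mem_insert_self i U⟩
    · intro T hT
      exact Finset.insert_erase (mem_filter.mp hT).2
    · intro U hU
      rw [mem_powerset, Finset.subset_erase] at hU
      exact Finset.erase_insert hU.2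
    · intro T hT
      have hiT : i ∈ T := (mem_filter.mp hT).2
      rw [Finset.card_erase_of_mem hiT]
      have : fcoef T f = 2⁻¹ * fcoef (T.erase i) (dfun i f) := by
        conv_lhs => rw [← Finset.insert_erase hiT]
        exact fcoef_insert i (T.erase i) (notMem_erase i T) f
      rw [this]; ring
  have hAB : ((4:ℝ)^n)⁻¹ * ∑ T ∈ S.powerset,
        (if i ∈ T then (1-t)^(T.card - 1) * (fcoef T f)^2 else 0)
      = 4⁻¹ * Bform (fun j => if j ∈ S.erase i then 1 - t else 0) (dfun i f) (dfun i f) := by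
    rw [hre, Bform_indicator, mul_left_comm]
    congr 1
    rw [Finset.mul_sum]
    exact sum_congr rfl fun U _ => by rw [sq]; ring
  have hflip : ∀ x, pivInd f i (Function.update x i (!(x i))) = pivInd f i x := by
    intro x
    rw [pivInd_eq_abs f hf, pivInd_eq_abs f hf, dfun_update]
  have hQ : QnoiseS n S t (pivInd f i)
      = Bform (fun j => if j ∈ S.erase i then 1 - t else 0)
          (fun x => |dfun i f x|) (fun x => |dfun i f x|) := by
    rw [Q_closed]
    have hzero : ∀ T ∈ S.powerset, T ∉ (S.erase i).powerset →
        (1-t)^T.card * (fcoef T (pivInd f i))^2 = 0 := by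
      intro T hT hT'
      have hiT : i ∈ T := by
        by_contra hiT
        exact hT' (mem_powerset.mpr (Finset.subset_erase.mpr ⟨mem_powerset.mp hT, hiT⟩))
      rw [fcoef_flip_zero i T hiT _ hflip]
      ring
    rw [← Finset.sum_subset (Finset.powerset_mono.mpr (Finset.erase_subset i S)) hzero]
    rw [Bform_indicator]
    congr 1
    refine sum_congr rfl fun U _ => ?_
    rw [show (fun x => |dfun i f x|) = pivInd f i from
      funext fun x => (pivInd_eq_abs f hf i x).symm, sq]
  constructor
  · rw [hAB, hQ]
    have hle := Bform_le _ (Kker_nonneg _ hρ0 hρ1) (dfun i f)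
    have h4 : (0:ℝ) ≤ 4⁻¹ := by norm_num
    exact mul_le_mul_of_nonneg_left hle h4
  · intro hmono
    have habs : (fun x => |dfun i f x|) = dfun i f := by
      funext x
      refine abs_of_nonneg ?_
      have hle : Function.update x i false ≤ Function.update x i true := by
        intro j
        rcases eq_or_ne j i with rfl | hj
        · simp
        · rw [Function.update_of_ne hj, Function.update_of_ne hj]
      have := hmono hle
      simp only [dfun]
      linarith
    rw [hAB, hQ, habs]

end DMR

/-- dynamical Margulis–Russo formula:
`0 ≤ -(d/dt) Q_t^S(f) ≤ (1/4) ∑_{i ∈ S} Q_t^S(i piv. for f)`, with equality in the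
second inequality when `f` is monotone. -/
theorem dynamical_margulis_russo (n : ℕ) (S : Finset (Fin n))
    (f : (Fin n → Bool) → ℝ) (hf : ∀ x, f x = 0 ∨ f x = 1)
    (t : ℝ) (ht : t ∈ Set.Icc (0:ℝ) 1) :
    0 ≤ -(deriv (fun s => QnoiseS n S s f) t) ∧
    -(deriv (fun s => QnoiseS n S s f) t) ≤ 4⁻¹ * ∑ i ∈ S, QnoiseS n S t (pivInd f i) ∧
    (Monotone f →
      -(deriv (fun s => QnoiseS n S s f) t) = 4⁻¹ * ∑ i ∈ S, QnoiseS n S t (pivInd f i)) := by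
  obtain ⟨ht0, ht1⟩ := ht
  have hD := DMR.hasDeriv_Q S f t
  rw [hD.deriv]
  have hneg : -(((4:ℝ)^n)⁻¹ * ∑ T ∈ S.powerset,
        (-(T.card:ℝ) * (1-t)^(T.card - 1)) * (DMR.fcoef T f)^2)
      = ((4:ℝ)^n)⁻¹ * ∑ T ∈ S.powerset,
        (T.card:ℝ) * ((1-t)^(T.card - 1) * (DMR.fcoef T f)^2) := by
    rw [← mul_neg, ← Finset.sum_neg_distrib]
    congr 1
    exact sum_congr rfl fun T _ => by ring
  rw [hneg]
  have hsplit : ((4:ℝ)^n)⁻¹ * ∑ T ∈ S.powerset,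
        (T.card:ℝ) * ((1-t)^(T.card - 1) * (DMR.fcoef T f)^2)
      = ∑ i ∈ S, ((4:ℝ)^n)⁻¹ * ∑ T ∈ S.powerset,
          (if i ∈ T then (1-t)^(T.card - 1) * (DMR.fcoef T f)^2 else 0) := by
    rw [← Finset.mul_sum]
    congr 1
    rw [Finset.sum_comm]
    refine sum_congr rfl fun T hT => ?_
    rw [Finset.sum_ite_mem, Finset.inter_eq_right.mpr (mem_powerset.mp hT), Finset.sum_const,
      nsmul_eq_mul]
  refine ⟨?_, ?_, ?_⟩
  · refine mul_nonneg (by positivity) (Finset.sum_nonneg fun T _ => ?_)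
    exact mul_nonneg (Nat.cast_nonneg _)
      (mul_nonneg (pow_nonneg (by linarith) _) (sq_nonneg _))
  · rw [hsplit, Finset.mul_sum]
    exact Finset.sum_le_sum fun i hi => (DMR.key_i S f hf t ht0 ht1 i hi).1
  · intro hmono
    rw [hsplit, Finset.mul_sum]
    exact Finset.sum_congr rfl fun i hi => (DMR.key_i S f hf t ht0 ht1 i hi).2 hmono
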